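/- Let R be an integral domain such that: (i) for every nonzero element a ∈ R, the quotient ring R/(a) has enough homogeneous polynomials, and (ii) for every ideal I of R, the cokernel of the natural map of unit groups R^× → (R/I)^× is a torsion group. Then R has enough homogeneous polynomials. -/

import Mathlib

open MvPolynomial

section Aux

variable {R : Type*} [CommRing R] {n : ℕ}

lemma eval_scale_of_isHomogeneous (f : MvPolynomial (Fin n) R) {d : ℕ}
    (hf : f.IsHomogeneous d) (c : R) (P : Fin n → R) :
    eval (fun i => c * P i) f = c ^ d * eval P f := by
  rw [eval_eq', eval_eq', Finset.mul_sum]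
  apply Finset.sum_congr rfl
  intro u hu
  have hdeg : (∑ i, u i) = d := by
    have h1 : Finsupp.weight (1 : Fin n → ℕ) u = d := hf (mem_support_iff.mp hu)
    rw [show (1 : Fin n → ℕ) = fun _ => 1 from rfl, ← Finsupp.degree_eq_weight_one] at h1
    rw [← h1, Finsupp.degree]
    exact (Finset.sum_subset (Finset.subset_univ _)
      (fun i _ hi => Finsupp.notMem_support_iff.mp hi)).symm
  calc coeff u f * ∏ i, (c * P i) ^ u i
      = coeff u f * ((∏ i, c ^ u i) * ∏ i, P i ^ u i) := by
        rw [← Finset.prod_mul_distrib]; simp [mul_pow]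
    _ = c ^ d * (coeff u f * ∏ i, P i ^ u i) := by
        rw [Finset.prod_pow_eq_pow_sum, hdeg]; ring

lemma exists_homogeneous_lift {A : Type*} [CommRing A] (g : R →+* A)
    (hg : Function.Surjective g) (f : MvPolynomial (Fin n) A) {e : ℕ}
    (hf : f.IsHomogeneous e) :
    ∃ F : MvPolynomial (Fin n) R, F.IsHomogeneous e ∧ MvPolynomial.map g F = f := by
  obtain ⟨F₀, hF₀⟩ := MvPolynomial.map_surjective g hg f
  refine ⟨homogeneousComponent e F₀, homogeneousComponent_isHomogeneous e F₀, ?_⟩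
  ext u
  rw [coeff_map, coeff_homogeneousComponent]
  split_ifs with h
  · rw [← coeff_map, hF₀]
  · rw [map_zero]
    exact (hf.coeff_eq_zero h).symm

lemma map_eval_eq {A : Type*} [CommRing A] (g : R →+* A) (P : Fin n → R)
    (F : MvPolynomial (Fin n) R) :
    g (eval P F) = eval (fun i => g (P i)) (MvPolynomial.map g F) := by
  rw [← eval₂_id F, eval₂_comp_left g (RingHom.id R) P F, ← eval₂_eq_eval_map]
  rfl

lemma exists_reduced_subset {α : Type*} [DecidableEq α] (r : α → α → Prop)
    (hrefl : ∀ a, r a a) (htrans : ∀ a b c, r a b → r b c → r a c) (S : Finset α) :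
    ∃ T ⊆ S, (∀ q ∈ S, ∃ p ∈ T, r p q) ∧ (∀ p ∈ T, ∀ q ∈ T, p ≠ q → ¬ r p q) := by
  classical
  induction S using Finset.strongInduction with
  | _ S ih =>
    by_cases h : ∃ p ∈ S, ∃ q ∈ S, p ≠ q ∧ r p q
    · obtain ⟨p, hp, q, hq, hne, hr⟩ := h
      obtain ⟨T, hTsub, hcov, hsep⟩ := ih (S.erase q) (Finset.erase_ssubset hq)
      refine ⟨T, hTsub.trans (Finset.erase_subset _ _), ?_, hsep⟩
      intro x hx
      by_cases hxq : x = q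
      · obtain ⟨t, ht, htp⟩ := hcov p (Finset.mem_erase.mpr ⟨hne, hp⟩)
        exact ⟨t, ht, htrans _ _ _ htp (hxq ▸ hr)⟩
      · exact hcov x (Finset.mem_erase.mpr ⟨hxq, hx⟩)
    · push_neg at h
      exact ⟨S, le_refl _, fun q hq => ⟨q, hq, hrefl q⟩, h⟩

lemma exists_combo {P : Fin n → R} (hP : Ideal.span (Set.range P) = ⊤) :
    ∃ c : Fin n → R, ∑ i, c i * P i = 1 := by
  have h1 : (1 : R) ∈ Ideal.span (Set.range P) := hP ▸ Submodule.mem_top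
  obtain ⟨c, hc⟩ := (Submodule.mem_span_range_iff_exists_fun R).mp h1
  exact ⟨c, by simpa [smul_eq_mul] using hc⟩

lemma proportional_of_minors_eq {P Q : Fin n → R}
    (hP : Ideal.span (Set.range P) = ⊤) (hQ : Ideal.span (Set.range Q) = ⊤)
    (h : ∀ p q, P p * Q q = P q * Q p) :
    ∃ u : Rˣ, ∀ i, Q i = (u : R) * P i := by
  obtain ⟨c, hc⟩ := exists_combo hP
  obtain ⟨e, he⟩ := exists_combo hQ
  have hprop : ∀ j, Q j = (∑ i, c i * Q i) * P j := by
    intro j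
    calc Q j = (∑ i, c i * P i) * Q j := by rw [hc, one_mul]
      _ = ∑ i, c i * (P i * Q j) := by rw [Finset.sum_mul]; simp [mul_assoc]
      _ = ∑ i, c i * (P j * Q i) := by
          apply Finset.sum_congr rfl; intro i _; rw [h i j]
      _ = (∑ i, c i * Q i) * P j := by
          rw [Finset.sum_mul]
          exact Finset.sum_congr rfl fun i _ => by ring
  have hunit : (∑ i, c i * Q i) * (∑ i, e i * P i) = 1 := by
    calc (∑ i, c i * Q i) * (∑ i, e i * P i)
        = ∑ i, e i * ((∑ j, c j * Q j) * P i) := by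
          rw [Finset.mul_sum]
          exact Finset.sum_congr rfl fun i _ => by ring
      _ = ∑ i, e i * Q i := by apply Finset.sum_congr rfl; intro i _; rw [← hprop i]
      _ = 1 := he
  exact ⟨⟨∑ i, c i * Q i, ∑ i, e i * P i, hunit,
    by rw [mul_comm] at hunit; exact hunit⟩, hprop⟩

end Aux



/-- A commutative ring `R` has enough homogeneous polynomials if for every `n ≥ 1`
and every finite set `S ⊆ R^n` whose tuples have coprime entries, there is a
nonconstant homogeneous polynomial taking unit values on `S`. -/
def HasEnoughHomogeneousPolynomials (R : Type*) [CommRing R] : Prop :=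
  ∀ n : ℕ, 1 ≤ n → ∀ S : Finset (Fin n → R),
    (∀ Q ∈ S, Ideal.span (Set.range Q) = ⊤) →
    ∃ (f : MvPolynomial (Fin n) R) (d : ℕ), 1 ≤ d ∧ f.IsHomogeneous d ∧
      ∀ Q ∈ S, IsUnit (MvPolynomial.eval Q f)

/-- If `R` is a domain such that every quotient by a nonzero principal ideal has
enough homogeneous polynomials, and for every ideal `I` the cokernel of
`Rˣ → (R/I)ˣ` is torsion, then `R` has enough homogeneous polynomials. -/
theorem hasEnoughHomogeneousPolynomials_of_quotients
    (R : Type*) [CommRing R] [IsDomain R]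
    (hquot : ∀ a : R, a ≠ 0 →
      HasEnoughHomogeneousPolynomials (R ⧸ Ideal.span {a}))
    (htors : ∀ I : Ideal R, ∀ u : (R ⧸ I)ˣ, ∃ k : ℕ, 1 ≤ k ∧
      u ^ k ∈ (Units.map (Ideal.Quotient.mk I).toMonoidHom).range) :
    HasEnoughHomogeneousPolynomials R := by
  intro n hn S hS
  classical
  -- reduce to pairwise non-proportional points
  obtain ⟨T, hTS, hcov, hsep⟩ := exists_reduced_subset
    (fun P Q : Fin n → R => ∃ u : Rˣ, ∀ i, Q i = (u : R) * P i)
    (fun P => ⟨1, fun i => by simp⟩)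
    (by
      rintro P Q X ⟨u, hu⟩ ⟨w, hw⟩
      refine ⟨w * u, fun i => ?_⟩
      rw [hw i, hu i, Units.val_mul]; ring) S
  have hTuni : ∀ P ∈ T, Ideal.span (Set.range P) = ⊤ := fun P hP => hS P (hTS hP)
  -- separating linear forms for ordered pairs
  have key : ∀ P ∈ T, ∀ Q ∈ T, P ≠ Q → ∃ Zpq : MvPolynomial (Fin n) R,
      Zpq.IsHomogeneous 1 ∧ eval Q Zpq = 0 ∧ eval P Zpq ≠ 0 := by
    intro P hP Q hQ hne
    have hnprop : ¬ (∀ p q, P p * Q q = P q * Q p) := fun hall =>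
      hsep P hP Q hQ hne (proportional_of_minors_eq (hTuni P hP) (hTuni Q hQ) hall)
    push_neg at hnprop
    obtain ⟨p, q, hpq⟩ := hnprop
    refine ⟨C (Q q) * X p - C (Q p) * X q,
      (isHomogeneous_C_mul_X _ _).sub (isHomogeneous_C_mul_X _ _), ?_, ?_⟩
    · simp only [map_sub, map_mul, eval_C, eval_X]
      ring
    · simp only [map_sub, map_mul, eval_C, eval_X]
      intro h0
      apply hpq
      have : Q q * P p = Q p * P q := by linear_combination h0
      linear_combination this
  choose! Z hZhom hZzero hZne using key
  have hζne : ∀ P ∈ T, ∀ Q ∈ T.erase P, eval P (Z P Q) ≠ 0 := by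
    intro P hP Q hQ
    have h1 := Finset.mem_erase.mp hQ
    exact hZne P hP Q h1.2 (Ne.symm h1.1)
  set ε : (Fin n → R) → R := fun P => ∏ Q ∈ T.erase P, eval P (Z P Q) with hεdef
  set a : R := ∏ P ∈ T, ε P with hadef
  have hane : a ≠ 0 := Finset.prod_ne_zero_iff.mpr fun P hP =>
    Finset.prod_ne_zero_iff.mpr fun Q hQ => hζne P hP Q hQ
  -- the quotient ring solution
  set mkI := Ideal.Quotient.mk (Ideal.span {a}) with hmkdef
  set T' : Finset (Fin n → R ⧸ Ideal.span {a}) := T.image (fun P i => mkI (P i)) with hT'def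
  have hT'uni : ∀ Q' ∈ T', Ideal.span (Set.range Q') = ⊤ := by
    intro Q' hQ'
    obtain ⟨P, hP, rfl⟩ := Finset.mem_image.mp hQ'
    obtain ⟨c, hc⟩ := exists_combo (hTuni P hP)
    rw [Ideal.eq_top_iff_one]
    apply (Submodule.mem_span_range_iff_exists_fun _).mpr
    refine ⟨fun i => mkI (c i), ?_⟩
    simp only [smul_eq_mul, ← map_mul, ← map_sum, hc, map_one]
  obtain ⟨f', e, he1, hf'hom, hf'unit⟩ := hquot a hane n hn T' hT'uni
  obtain ⟨H, hHhom, hHmap⟩ := exists_homogeneous_lift mkI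
    Ideal.Quotient.mk_surjective f' hf'hom
  have hHunit : ∀ P ∈ T, IsUnit (mkI (eval P H)) := by
    intro P hP
    rw [map_eval_eq mkI P H, hHmap]
    exact hf'unit _ (Finset.mem_image_of_mem _ hP)
  -- torsion lifting of units
  have key2 : ∀ P ∈ T, ∃ k : ℕ, 1 ≤ k ∧ ∃ v : Rˣ,
      mkI (v : R) = (mkI (eval P H)) ^ k := by
    intro P hP
    obtain ⟨k, hk1, w, hw⟩ := htors (Ideal.span {a}) (hHunit P hP).unit
    refine ⟨k, hk1, w, ?_⟩
    have := congrArg (fun x : (R ⧸ Ideal.span {a})ˣ => (x : R ⧸ Ideal.span {a})) hw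
    simpa [IsUnit.unit_spec] using this
  choose! k hk1 v hv using key2
  set m := T.card with hmdef
  set K : ℕ := (∏ P ∈ T, k P) * (m + 1) with hKdef
  have hprodk : 1 ≤ ∏ P ∈ T, k P := Finset.one_le_prod' hk1
  have hK1 : 1 ≤ K := Nat.mul_pos hprodk (Nat.succ_pos m)
  set d := e * K with hddef
  have hd1 : 1 ≤ d := Nat.mul_pos he1 hK1
  have hKm : m + 1 ≤ K := by
    calc m + 1 = 1 * (m + 1) := (one_mul _).symm
      _ ≤ (∏ P ∈ T, k P) * (m + 1) := Nat.mul_le_mul_right _ hprodk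
  have hKd : K ≤ d := by
    calc K = 1 * K := (one_mul _).symm
      _ ≤ e * K := Nat.mul_le_mul_right _ he1
  have hmd : m - 1 ≤ d := by omega
  -- exact correction coefficients
  have key3 : ∀ P ∈ T, ∃ ρ : R, ρ * ε P =
      (v P : R) ^ ((∏ Q ∈ T.erase P, k Q) * (m + 1)) - (eval P H) ^ K := by
    intro P hP
    have hKP : K = k P * ((∏ Q ∈ T.erase P, k Q) * (m + 1)) := by
      rw [hKdef, ← Finset.mul_prod_erase T k hP, mul_assoc]
    have hmem : (v P : R) ^ ((∏ Q ∈ T.erase P, k Q) * (m + 1)) - (eval P H) ^ K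
        ∈ Ideal.span {a} := by
      have h0 : mkI ((v P : R) ^ ((∏ Q ∈ T.erase P, k Q) * (m + 1)) - (eval P H) ^ K)
          = 0 := by
        rw [map_sub, map_pow, map_pow, hv P hP, ← pow_mul, ← hKP, sub_self]
      exact Ideal.Quotient.eq_zero_iff_mem.mp h0
    obtain ⟨ρ₀, hρ₀⟩ := Ideal.mem_span_singleton'.mp hmem
    refine ⟨ρ₀ * ∏ Q ∈ T.erase P, ε Q, ?_⟩
    calc (ρ₀ * ∏ Q ∈ T.erase P, ε Q) * ε P
        = ρ₀ * (ε P * ∏ Q ∈ T.erase P, ε Q) := by ring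
      _ = ρ₀ * a := by rw [Finset.mul_prod_erase T ε hP]
      _ = _ := hρ₀
  choose! ρ hρ using key3
  -- linear forms with value 1
  have key4 : ∀ P ∈ T, ∃ L : MvPolynomial (Fin n) R, L.IsHomogeneous 1 ∧ eval P L = 1 := by
    intro P hP
    obtain ⟨c, hc⟩ := exists_combo (hTuni P hP)
    refine ⟨∑ i, C (c i) * X i,
      IsHomogeneous.sum _ _ _ (fun i _ => isHomogeneous_C_mul_X _ _), ?_⟩
    simp only [map_sum, map_mul, eval_C, eval_X]
    exact hc
  choose! L hLhom hLone using key4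
  -- the final polynomial
  set B : (Fin n → R) → MvPolynomial (Fin n) R := fun P => ∏ Q ∈ T.erase P, Z P Q with hBdef
  have hBhom : ∀ P ∈ T, (B P).IsHomogeneous (m - 1) := by
    intro P hP
    have h1 := IsHomogeneous.prod (T.erase P) (Z P) (fun _ => 1)
      (fun Q hQ => hZhom P hP Q (Finset.mem_erase.mp hQ).2
        (Ne.symm (Finset.mem_erase.mp hQ).1))
    have h2 : ∑ _Q ∈ T.erase P, 1 = m - 1 := by
      rw [Finset.sum_const, smul_eq_mul, mul_one, Finset.card_erase_of_mem hP]
    rwa [h2] at h1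
  have hBzero : ∀ P ∈ T, ∀ P' ∈ T, P' ≠ P → eval P' (B P) = 0 := by
    intro P hP P' hP' hne
    rw [hBdef]
    simp only
    rw [map_prod]
    exact Finset.prod_eq_zero (Finset.mem_erase.mpr ⟨hne, hP'⟩)
      (hZzero P hP P' hP' (Ne.symm hne))
  have hBval : ∀ P ∈ T, eval P (B P) = ε P := by
    intro P hP
    rw [hBdef, hεdef]
    exact map_prod (eval P) _ _
  set f : MvPolynomial (Fin n) R :=
    H ^ K + ∑ P ∈ T, C (ρ P) * (L P ^ (d - (m - 1)) * B P) with hfdef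
  have hfhom : f.IsHomogeneous d := by
    apply IsHomogeneous.add
    · have := hHhom.pow K
      rwa [← hddef] at this
    · apply IsHomogeneous.sum
      intro P hP
      have h1 : (L P ^ (d - (m - 1)) * B P).IsHomogeneous (1 * (d - (m - 1)) + (m - 1)) :=
        ((hLhom P hP).pow _).mul (hBhom P hP)
      have h2 : 1 * (d - (m - 1)) + (m - 1) = d := by omega
      rw [h2] at h1
      exact h1.C_mul _
  have hfval : ∀ P ∈ T, eval P f =
      (v P : R) ^ ((∏ Q ∈ T.erase P, k Q) * (m + 1)) := by
    intro P hP
    have hsum : ∑ P' ∈ T, eval P (C (ρ P') * (L P' ^ (d - (m - 1)) * B P'))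
        = ρ P * ε P := by
      rw [Finset.sum_eq_single_of_mem P hP]
      · rw [map_mul, map_mul, map_pow, eval_C, hLone P hP, one_pow, one_mul, hBval P hP]
      · intro P' hP' hne
        rw [map_mul, map_mul, hBzero P' hP' P hP hne.symm, mul_zero, mul_zero]
    rw [hfdef, map_add, map_pow, map_sum, hsum, hρ P hP]
    ring
  refine ⟨f, d, hd1, hfhom, ?_⟩
  intro Q₀ hQ₀
  obtain ⟨P, hPT, u, hu⟩ := hcov Q₀ hQ₀
  have hQ₀eq : Q₀ = fun i => (u : R) * P i := funext hu
  rw [hQ₀eq, eval_scale_of_isHomogeneous f hfhom (u : R) P, hfval P hPT]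
  exact ((u ^ d).isUnit).mul ((v P ^ ((∏ Q ∈ T.erase P, k Q) * (m + 1))).isUnit)
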